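/- Let (B, ⌊·,·⌋, ‖·‖) be a Banach SSD space and f a proper convex lower semicontinuous function on B. Then f is a VZ function ((f−q) ▽ p = 0 on B) if and only if f ≥ q on B and P_q(f) is p-dense in B, i.e., for every c ∈ B, inf_{a ∈ P_q(f)} p(a − c) = 0. -/

import Mathlib

open Filter Topology

lemma aux_exists_Pq {B : Type*} [NormedAddCommGroup B] [NormedSpace ℝ B] [CompleteSpace B]
    (q : B → ℝ) (hqcont : Continuous q)
    (f : B → EReal)
    (G : B → ℝ) (Dg : Set B)
    (hf : ∀ b ∈ Dg, f b = ((q b + G b : ℝ) : EReal))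
    (hgeq : ∀ b, ((q b : ℝ) : EReal) ≤ f b)
    (hlsc : LowerSemicontinuous f)
    (hstep : ∀ b ∈ Dg, ∀ δ : ℝ, 0 < δ → ∃ y ∈ Dg, G y < δ ∧ ‖b - y‖ ^ 2 ≤ 6 * δ + 4 * G b)
    (hG0 : ∀ b ∈ Dg, 0 ≤ G b)
    {b₀ : B} (hb₀ : b₀ ∈ Dg) {η : ℝ} (hη : 0 < η) (hGb₀ : G b₀ < η) :
    ∃ a : B, f a = ((q a : ℝ) : EReal) ∧ ‖b₀ - a‖ ≤ 5 * Real.sqrt η := by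
  classical
  have key : ∀ (n : ℕ) (b : B), b ∈ Dg → ∃ y, y ∈ Dg ∧ G y < η/4^(n+1) ∧
      ‖b - y‖^2 ≤ 6*(η/4^(n+1)) + 4*G b := by
    intro n b hb
    obtain ⟨y, hy1, hy2, hy3⟩ := hstep b hb (η/4^(n+1)) (by positivity)
    exact ⟨y, hy1, hy2, hy3⟩
  let u : ℕ → {x : B // x ∈ Dg} := fun n => Nat.rec (motive := fun _ => {x : B // x ∈ Dg})
    ⟨b₀, hb₀⟩ (fun n prev => ⟨(key n prev.1 prev.2).choose, (key n prev.1 prev.2).choose_spec.1⟩) n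
  have hspec : ∀ n, G (u (n+1)).1 < η/4^(n+1) ∧
      ‖(u n).1 - (u (n+1)).1‖^2 ≤ 6*(η/4^(n+1)) + 4*G (u n).1 := by
    intro n
    exact ⟨(key n (u n).1 (u n).2).choose_spec.2.1, (key n (u n).1 (u n).2).choose_spec.2.2⟩
  have hG : ∀ n, G (u n).1 < η/4^n := by
    intro n
    cases n with
    | zero => simpa using (show G (u 0).1 < η from hGb₀)
    | succ n => exact (hspec n).1
  have hd : ∀ n, dist (u n).1 (u (n+1)).1 ≤ Real.sqrt (6*η) * (1/2)^n := by
    intro n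
    rw [dist_eq_norm]
    have h1 := (hspec n).2
    have h2 := hG n
    have hpow : η/4^(n+1) = (η/4^n)/4 := by rw [pow_succ]; ring
    have hXnn : 0 ≤ η/4^n := by positivity
    have hle : ‖(u n).1 - (u (n+1)).1‖^2 ≤ 6*η*((1/4:ℝ)^n) := by
      have h14 : (1/4:ℝ)^n = 1/4^n := by rw [one_div, inv_pow, one_div]
      rw [h14]
      have hXX : 6*η*((1:ℝ)/4^n) = 6*(η/4^n) := by ring
      rw [hpow] at h1
      linarith
    have hrhs : (Real.sqrt (6*η) * (1/2:ℝ)^n)^2 = 6*η*((1/4:ℝ)^n) := by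
      rw [mul_pow, Real.sq_sqrt (by positivity : (0:ℝ) ≤ 6*η), ← pow_mul, mul_comm n 2, pow_mul]
      norm_num
    nlinarith [norm_nonneg ((u n).1 - (u (n+1)).1),
      mul_nonneg (Real.sqrt_nonneg (6*η)) (pow_nonneg (by norm_num : (0:ℝ) ≤ 1/2) n)]
  have hcauchy : CauchySeq (fun n => (u n).1) := cauchySeq_of_le_geometric (1/2) _ (by norm_num) hd
  obtain ⟨a, ha⟩ := cauchySeq_tendsto_of_complete hcauchy
  have hdist : dist (u 0).1 a ≤ Real.sqrt (6*η) / (1 - 1/2) :=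
    dist_le_of_le_geometric_of_tendsto₀ _ _ (by norm_num) hd ha
  have h5 : Real.sqrt (6*η) / (1 - 1/2) ≤ 5 * Real.sqrt η := by
    have h1 : Real.sqrt (6*η) = Real.sqrt 6 * Real.sqrt η := Real.sqrt_mul (by norm_num) η
    have h6 : Real.sqrt 6 ≤ 5/2 := by
      nlinarith [Real.sq_sqrt (show (0:ℝ) ≤ 6 by norm_num), Real.sqrt_nonneg 6]
    have hsqnn : 0 ≤ Real.sqrt η := Real.sqrt_nonneg η
    have h2 : Real.sqrt (6*η)/(1-1/2) = 2*(Real.sqrt 6*Real.sqrt η) := by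
      rw [h1]; field_simp; ring
    rw [h2]
    nlinarith
  have hGtend : Tendsto (fun n => G (u n).1) atTop (𝓝 0) := by
    have h4n : Tendsto (fun n : ℕ => η * (1/4:ℝ)^n) atTop (𝓝 0) := by
      have := (tendsto_pow_atTop_nhds_zero_of_lt_one (by norm_num : (0:ℝ) ≤ 1/4) (by norm_num)).const_mul η
      simpa using this
    refine squeeze_zero (fun n => hG0 _ (u n).2) (fun n => ?_) h4n
    have := hG n
    have h14 : η * (1/4:ℝ)^n = η/4^n := by rw [one_div, inv_pow]; ring
    linarith [h14 ▸ (le_of_lt (hG n))]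
  have hfa : f a = ((q a : ℝ) : EReal) := by
    refine le_antisymm ?_ (hgeq a)
    by_contra hlt
    rw [not_le] at hlt
    obtain ⟨m, hm1, hm2⟩ := EReal.lt_iff_exists_real_btwn.mp hlt
    have hev1 : ∀ᶠ x in 𝓝 a, (m:EReal) < f x := hlsc a _ hm2
    have hev2 : ∀ᶠ n in atTop, (m:EReal) < f (u n).1 := ha.eventually hev1
    have htend : Tendsto (fun n => q (u n).1 + G (u n).1) atTop (𝓝 (q a)) := by
      have h1 : Tendsto (fun n => q (u n).1) atTop (𝓝 (q a)) := (hqcont.tendsto a).comp ha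
      simpa using h1.add hGtend
    have hm' : q a < m := EReal.coe_lt_coe_iff.mp hm1
    have hev3 : ∀ᶠ n in atTop, q (u n).1 + G (u n).1 < m := htend.eventually_lt_const hm'
    obtain ⟨n, hn1, hn2⟩ := (hev2.and hev3).exists
    rw [hf _ (u n).2] at hn1
    exact absurd (EReal.coe_lt_coe_iff.mp hn1) (by linarith)
  refine ⟨a, hfa, ?_⟩
  have : dist b₀ a ≤ 5 * Real.sqrt η := le_trans hdist h5
  rwa [dist_eq_norm] at this

set_option maxHeartbeats 1000000 in
theorem stmt_17 (B : Type*) [NormedAddCommGroup B] [NormedSpace ℝ B] [CompleteSpace B]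
    (hB : ∃ b : B, b ≠ 0)
    (br : B →ₗ[ℝ] B →ₗ[ℝ] ℝ) (hsym : ∀ b c, br b c = br c b)
    (hbd : ∀ b c : B, |br b c| ≤ ‖b‖ * ‖c‖)
    (q : B → ℝ) (hq : ∀ b, q b = br b b / 2)
    (p : B → ℝ) (hp : ∀ b, p b = ‖b‖ ^ 2 / 2 + q b)
    (f : B → EReal) (hproper : ∃ b, f b ≠ ⊤) (hreal : ∀ b, f b ≠ ⊥)
    (hconv : ∀ x y : B, ∀ t : ℝ, 0 ≤ t → t ≤ 1 →
      f (t • x + (1 - t) • y) ≤ (t : EReal) * f x + ((1 - t : ℝ) : EReal) * f y)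
    (hlsc : LowerSemicontinuous f) :
    (∀ c : B, (⨅ b : B, (f b - (q b : EReal) + (p (c - b) : EReal))) = 0) ↔
      ((∀ b : B, (q b : EReal) ≤ f b) ∧
        ∀ c : B, IsGLB ((fun a => p (a - c)) '' {b : B | f b = (q b : EReal)}) 0) := by
  classical
  -- basic algebra about q and p
  have hq2 : ∀ (a b : ℝ) (x y : B), q (a•x + b•y) = a^2*q x + b^2*q y + a*b*(br x y) := by
    intro a b x y
    simp only [hq, map_add, map_smul, LinearMap.add_apply, LinearMap.smul_apply, smul_eq_mul]
    rw [hsym y x]; ring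
  have hq_add : ∀ x y : B, q (x + y) = q x + q y + br x y := by
    intro x y
    have h := hq2 1 1 x y
    rw [one_smul, one_smul] at h
    rw [h]; ring
  have hq_sub : ∀ x y : B, q (x - y) = q x + q y - br x y := by
    intro x y
    have h := hq2 1 (-1) x y
    rw [one_smul, neg_one_smul, ← sub_eq_add_neg] at h
    rw [h]; ring
  have hqabs : ∀ x : B, |q x| ≤ ‖x‖^2/2 := by
    intro x
    rw [hq, abs_div]
    have := hbd x x
    rw [show |(2:ℝ)| = 2 by norm_num]
    rw [show ‖x‖*‖x‖ = ‖x‖^2 by ring] at this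
    linarith
  have hp0 : ∀ x : B, 0 ≤ p x := by
    intro x
    have := (abs_le.mp (hqabs x)).1
    rw [hp]; linarith
  have hpneg : ∀ x : B, p (-x) = p x := by
    intro x
    have hqn : q (-x) = q x := by
      have := hq2 (-1) 0 x x
      simp only [neg_one_smul, zero_smul, add_zero] at this
      rw [this]; ring
    rw [hp, hp, norm_neg, hqn]
  have hqcont : Continuous q := by
    have hb' : ∀ (x y : B), ‖br x y‖ ≤ 1 * ‖x‖ * ‖y‖ := by
      intro x y
      rw [one_mul, Real.norm_eq_abs]
      exact hbd x y
    let brL : B →L[ℝ] B →L[ℝ] ℝ := LinearMap.mkContinuous₂ br 1 hb'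
    have h2 : Continuous fun x : B => brL x x := brL.continuous.clm_apply continuous_id
    have h3 : Continuous fun x : B => brL x x / 2 := h2.div_const 2
    refine h3.congr fun x => ?_
    show brL x x / 2 = q x
    rw [hq]
    rfl
  constructor
  · -- forward direction
    intro hVZ
    -- Step A : f ≥ q
    have hgeq : ∀ b : B, ((q b : ℝ) : EReal) ≤ f b := by
      intro b
      by_contra hc
      rw [not_le] at hc
      have hne : f b ≠ ⊤ := by
        intro h
        rw [h] at hc
        exact absurd hc (by simp)
      obtain ⟨r, hr⟩ : ∃ r : ℝ, f b = (r : EReal) := ⟨(f b).toReal, (EReal.coe_toReal hne (hreal b)).symm⟩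
      have hle := iInf_le (fun b' => f b' - ((q b' : ℝ) : EReal) + ((p (b - b') : ℝ) : EReal)) b
      rw [hVZ b] at hle
      have hpz : p (b - b) = 0 := by
        simp only [sub_self, hp, hq, norm_zero, map_zero, LinearMap.zero_apply]
        norm_num
      rw [hr, hpz, ← EReal.coe_sub, ← EReal.coe_add] at hle
      have hrq : r < q b := by exact_mod_cast hr ▸ hc
      have : (0:ℝ) ≤ r - q b + 0 := by exact_mod_cast hle
      linarith
    -- the finiteness domain and excess function
    set Dg : Set B := {b | f b ≠ ⊤} with hDgdef
    set G : B → ℝ := fun b => (f b).toReal - q b with hGdef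
    clear_value Dg G
    have hfDg : ∀ b ∈ Dg, f b = ((q b + G b : ℝ) : EReal) := by
      intro b hb
      rw [hDgdef, Set.mem_setOf_eq] at hb
      have h1 : ((f b).toReal : EReal) = f b := EReal.coe_toReal hb (hreal b)
      rw [show q b + G b = (f b).toReal by simp only [hGdef]; ring]
      exact h1.symm
    have hG0 : ∀ b ∈ Dg, 0 ≤ G b := by
      intro b hb
      have h := hgeq b
      rw [hfDg b hb] at h
      have := EReal.coe_le_coe_iff.mp h
      linarith
    -- VZ extraction to reals
    have hVZ' : ∀ c : B, ∀ δ : ℝ, 0 < δ → ∃ b ∈ Dg, G b + p (c - b) < δ := by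
      intro c δ hδ
      have hlt : (⨅ b : B, (f b - ((q b:ℝ) : EReal) + ((p (c - b):ℝ) : EReal))) < ((δ:ℝ) : EReal) := by
        rw [hVZ c]
        exact_mod_cast hδ
      obtain ⟨b, hb⟩ := iInf_lt_iff.mp hlt
      have hbtop : b ∈ Dg := by
        rw [hDgdef, Set.mem_setOf_eq]
        intro h
        rw [h, EReal.top_sub_coe, EReal.top_add_coe] at hb
        exact absurd hb (by simp)
      refine ⟨b, hbtop, ?_⟩
      rw [hfDg b hbtop, ← EReal.coe_sub, ← EReal.coe_add] at hb
      have := EReal.coe_lt_coe_iff.mp hb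
      linarith
    -- convexity master inequality
    have hmaster : ∀ x ∈ Dg, ∀ y ∈ Dg, ∀ t : ℝ, 0 ≤ t → t ≤ 1 →
        q (t•x + (1-t)•y) ≤ t*(q x + G x) + (1-t)*(q y + G y) := by
      intro x hx y hy t ht0 ht1
      have h1 := hconv x y t ht0 ht1
      rw [hfDg x hx, hfDg y hy, ← EReal.coe_mul, ← EReal.coe_mul, ← EReal.coe_add] at h1
      exact EReal.coe_le_coe_iff.mp ((hgeq _).trans h1)
    -- midpoint inequality
    have hmid : ∀ b ∈ Dg, ∀ y ∈ Dg, -(2*(G b + G y)) ≤ q (b - y) := by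
      intro b hb y hy
      have h := hmaster b hb y hy (1/2) (by norm_num) (by norm_num)
      rw [show (1:ℝ) - 1/2 = 1/2 by norm_num] at h
      rw [hq2 (1/2) (1/2) b y] at h
      have h2 := hq_sub b y
      have h3 : (br b) y ≤ q b + q y + 2*G b + 2*G y := by linarith
      linarith [h2, h3]
    -- sharp two-point inequality against points of P_q
    have hqa : ∀ a : B, f a = ((q a:ℝ) : EReal) → ∀ v ∈ Dg, -(G v) ≤ q (a - v) := by
      intro a ha v hv
      have haDg : a ∈ Dg := by
        rw [hDgdef, Set.mem_setOf_eq, ha]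
        exact EReal.coe_ne_top _
      have hGa : G a = 0 := by
        simp only [hGdef, ha, EReal.toReal_coe]
        ring
      have key : ∀ δ : ℝ, 0 < δ → -(G v) - δ ≤ q (a - v) := by
        intro δ hδ
        have hg20 : 0 ≤ G v := hG0 v hv
        set g₂ := G v with hg2def
        clear_value g₂
        set t := (g₂ + δ/2)/(g₂ + δ) with htdef
        clear_value t
        have hD : 0 < g₂ + δ := by linarith
        have hN : 0 < g₂ + δ/2 := by linarith
        have htpos : 0 < t := by rw [htdef]; positivity
        have htlt : t < 1 := by
          rw [htdef, div_lt_one hD]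
          linarith
        have h := hmaster a haDg v hv t (le_of_lt htpos) (le_of_lt htlt)
        rw [hGa, hq2 t (1-t) a v, ← hg2def] at h
        have hbr : br a v = q a + q v - q (a - v) := by
          have := hq_sub a v; linarith
        rw [hbr] at h
        set Q := q (a - v) with hQdef
        clear_value Q
        have h4 : -(t*(1-t)*Q) ≤ (1-t)*g₂ := by linarith [h]
        have h5 : 0 ≤ g₂ + t * Q := by
          have h6 : 0 < 1 - t := by linarith
          have h7 : 0 ≤ (1-t)*(g₂ + t*Q) := by linarith [h4]
          nlinarith [h7, h6]
        by_contra hcon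
        push_neg at hcon
        have ht2 : t*(g₂+δ) = g₂ + δ/2 := by
          rw [htdef]; field_simp
        nlinarith [h5, hcon, htpos, ht2, hδ, mul_pos htpos (show (0:ℝ) < -(g₂+δ) - Q by linarith)]
      by_contra hcon
      push_neg at hcon
      have := key ((-(G v) - q (a-v))/2) (by linarith)
      linarith
    -- the step hypothesis for the construction lemma
    have hstepB : ∀ b ∈ Dg, ∀ δ : ℝ, 0 < δ → ∃ y ∈ Dg, G y < δ ∧ ‖b - y‖^2 ≤ 6*δ + 4*G b := by
      intro b hb δ hδ
      obtain ⟨y, hy, hlt⟩ := hVZ' b δ hδ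
      have hGy0 := hG0 y hy
      have hpby := hp0 (b - y)
      refine ⟨y, hy, by linarith, ?_⟩
      have h1 : p (b - y) < δ := by linarith
      have h2 := hmid b hb y hy
      have h3 : G y < δ := by linarith
      have h4 : ‖b - y‖^2 = 2*p (b-y) - 2*q (b-y) := by rw [hp]; ring
      linarith
    -- the abstract construction lemma, inlined as `haux`
    have haux : ∀ b₀ ∈ Dg, ∀ η : ℝ, 0 < η → G b₀ < η →
        ∃ a : B, f a = ((q a : ℝ) : EReal) ∧ ‖b₀ - a‖ ≤ 5 * Real.sqrt η := by
      intro b₀ hb₀ η hη hGb₀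
      exact aux_exists_Pq q hqcont f G Dg hfDg hgeq hlsc hstepB hG0 hb₀ hη hGb₀
    -- get one point of P_q
    obtain ⟨b₁, hb₁⟩ := hproper
    have hb₁Dg : b₁ ∈ Dg := by rw [hDgdef]; exact hb₁
    obtain ⟨a₀, ha₀, -⟩ := haux b₁ hb₁Dg (G b₁ + 1) (by have := hG0 b₁ hb₁Dg; linarith) (by linarith)
    refine ⟨hgeq, fun c => ?_⟩
    constructor
    · rintro x ⟨a, -, rfl⟩
      exact hp0 _
    · intro l hl
      by_contra hlpos
      push_neg at hlpos
      -- constants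
      set Bc : ℝ := ‖a₀‖ + ‖c‖ with hBcdef
      set A : ℝ := 2 + ‖c‖^2/2 + ‖a₀‖^2/2 + Bc*‖c‖ with hAdef
      set R : ℝ := Real.sqrt (4*A + 4*Bc^2) with hRdef
      clear_value Bc A R
      have hR0 : 0 ≤ R := by rw [hRdef]; exact Real.sqrt_nonneg _
      have hden : 0 < 26 + 10*R := by linarith
      set η : ℝ := min 1 ((l/(2*(26 + 10*R)))^2) with hηdef
      clear_value η
      have hη0 : 0 < η := by
        rw [hηdef]
        exact lt_min one_pos (pow_pos (div_pos hlpos (by linarith)) 2)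
      have hη1 : η ≤ 1 := by rw [hηdef]; exact min_le_left _ _
      obtain ⟨b, hbDg, hbval⟩ := hVZ' c η hη0
      have hGbnn := hG0 b hbDg
      have hpcb := hp0 (c - b)
      have hGb : G b < η := by linarith
      have hpb : p (c - b) < η := by linarith
      -- bound on ‖c - b‖
      have hr : ‖c - b‖ ≤ R := by
        have h1 : -(G b) ≤ q (a₀ - b) := hqa a₀ ha₀ b hbDg
        have h2 := hq_sub a₀ b
        have h3 : p (c-b) = ‖c-b‖^2/2 + (q c + q b - br c b) := by rw [hp, hq_sub]
        have h4 := (abs_le.mp (hbd c b)).2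
        have h5 := (abs_le.mp (hbd a₀ b)).1
        have h6 := (abs_le.mp (hqabs c)).1
        have h7 := (abs_le.mp (hqabs a₀)).2
        have h8 : ‖b‖ ≤ ‖c‖ + ‖c - b‖ := by
          calc ‖b‖ = ‖c - (c - b)‖ := by congr 1; abel
          _ ≤ ‖c‖ + ‖c - b‖ := norm_sub_le _ _
        have h9 : ‖c-b‖^2/2 ≤ (2 + ‖c‖^2/2 + ‖a₀‖^2/2 + (‖a₀‖+‖c‖)*‖c‖) + (‖a₀‖+‖c‖)*‖c-b‖ := by
          have hint : 0 ≤ (‖a₀‖ + ‖c‖) * (‖c‖ + ‖c-b‖ - ‖b‖) :=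
            mul_nonneg (by positivity) (by linarith)
          linarith [h1, h2, h3, hpb, hGb, hη1, hint]
        have h10 : ‖c-b‖^2 ≤ 4*A + 4*Bc^2 := by
          rw [hAdef, hBcdef]
          nlinarith [h9, sq_nonneg (‖c-b‖ - 2*(‖a₀‖+‖c‖))]
        rw [hRdef]
        exact (Real.le_sqrt (norm_nonneg _) (by linarith [h10, sq_nonneg ‖c-b‖])).mpr h10
      -- a point of P_q near b
      obtain ⟨a, haPq, hanorm⟩ := haux b hbDg η hη0 hGb
      set s := ‖b - a‖ with hsdef
      clear_value s
      have hsnn : 0 ≤ s := by rw [hsdef]; exact norm_nonneg _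
      have hsqnn : 0 ≤ Real.sqrt η := Real.sqrt_nonneg η
      have hsq : Real.sqrt η ≤ l/(2*(26+10*R)) := by
        have hm : η ≤ (l/(2*(26+10*R)))^2 := by rw [hηdef]; exact min_le_right _ _
        calc Real.sqrt η ≤ Real.sqrt ((l/(2*(26+10*R)))^2) := Real.sqrt_le_sqrt hm
        _ = l/(2*(26+10*R)) := Real.sqrt_sq (le_of_lt (div_pos hlpos (by linarith)))
      have hηs : η ≤ Real.sqrt η := by
        have hs1 : Real.sqrt η ≤ 1 := Real.sqrt_le_one.mpr hη1
        nlinarith [Real.sq_sqrt (le_of_lt hη0)]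
      have hfinal : p (a - c) < l := by
        have e1 : a - c = (a - b) + (b - c) := by abel
        have e2 : q (a - c) = q (a-b) + q (b-c) + br (a-b) (b-c) := by rw [e1, hq_add]
        have hab : ‖a - b‖ = s := by rw [hsdef]; exact norm_sub_rev _ _
        have e3 : ‖a - c‖ ≤ s + ‖b - c‖ := by
          rw [e1]
          refine (norm_add_le _ _).trans ?_
          rw [hab]
        have e4 : q (a - b) ≤ s^2/2 := by
          have := (abs_le.mp (hqabs (a-b))).2
          rw [hab] at this
          linarith
        have e5 : q (b - c) ≤ η - ‖b-c‖^2/2 := by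
          have hpbc : p (b - c) < η := by
            rw [show b - c = -(c-b) by abel, hpneg]
            exact hpb
          rw [hp] at hpbc
          linarith
        have e6 : br (a-b) (b-c) ≤ s * ‖b-c‖ := by
          have := (abs_le.mp (hbd (a-b) (b-c))).2
          rw [hab] at this
          linarith
        have e7 : ‖b - c‖ ≤ R := by rw [norm_sub_rev]; exact hr
        have e8 : p (a - c) = ‖a-c‖^2/2 + q (a-c) := hp _
        have e9 : ‖a-c‖^2 ≤ (s + ‖b-c‖)^2 := by
          have := pow_le_pow_left₀ (norm_nonneg (a-c)) e3 2
          exact this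
        have step1 : p (a - c) ≤ η + s^2 + 2*s*‖b-c‖ := by nlinarith [e2, e4, e5, e6, e8, e9, sq_nonneg (s + ‖b-c‖)]
        have step2 : s^2 ≤ 25*η := by nlinarith [hanorm, hsnn, hsqnn, Real.sq_sqrt (le_of_lt hη0)]
        have step3 : 2*s*‖b-c‖ ≤ 10*R*Real.sqrt η := by
          have hm1 : s * ‖b-c‖ ≤ (5*Real.sqrt η)*R :=
            mul_le_mul hanorm e7 (norm_nonneg _) (by positivity)
          linarith
        have step4 : p (a - c) ≤ (26 + 10*R)*Real.sqrt η := by linarith [step1, step2, step3, hηs]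
        have step5 : (26+10*R)*Real.sqrt η ≤ (26+10*R)*(l/(2*(26+10*R))) :=
          mul_le_mul_of_nonneg_left hsq (by linarith)
        have step6 : (26+10*R)*(l/(2*(26+10*R))) = l/2 := by field_simp
        linarith [step4, step5, step6, hlpos]
      have hmem : p (a - c) ∈ (fun a => p (a - c)) '' {b : B | f b = ((q b:ℝ) : EReal)} :=
        ⟨a, haPq, rfl⟩
      exact absurd (hl hmem) (not_le.mpr hfinal)
  · -- reverse direction
    rintro ⟨hgeq, hglb⟩ c
    refine le_antisymm ?_ ?_
    · -- iInf ≤ 0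
      by_contra h
      push_neg at h
      obtain ⟨x, hx1, hx2⟩ := EReal.lt_iff_exists_real_btwn.mp h
      have hx0 : (0:ℝ) < x := by exact_mod_cast hx1
      have hex : ∃ a, f a = ((q a:ℝ) : EReal) ∧ p (a - c) < x := by
        by_contra hno
        push_neg at hno
        have hlb : x ∈ lowerBounds ((fun a => p (a-c)) '' {b : B | f b = ((q b:ℝ) : EReal)}) := by
          rintro y ⟨a, ha, rfl⟩
          exact hno a ha
        have := (hglb c).2 hlb
        linarith
      obtain ⟨a, ha, hpa⟩ := hex
      have hterm : f a - ((q a:ℝ) : EReal) + ((p (c - a):ℝ) : EReal) < ((x:ℝ) : EReal) := by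
        rw [ha, ← EReal.coe_sub, ← EReal.coe_add]
        rw [show p (c - a) = p (a - c) by rw [show c - a = -(a-c) by abel, hpneg]]
        exact_mod_cast (show (q a - q a + p (a-c) : ℝ) < x by linarith)
      have hcon := (iInf_le (fun b => f b - ((q b:ℝ) : EReal) + ((p (c - b):ℝ) : EReal)) a).trans_lt hterm
      exact absurd hx2 (not_lt.mpr (le_of_lt hcon))
    · -- 0 ≤ iInf
      refine le_iInf fun b => ?_
      by_cases hb : f b = ⊤
      · rw [hb, EReal.top_sub_coe, EReal.top_add_coe]
        exact le_top
      · obtain ⟨r, hr⟩ : ∃ r : ℝ, f b = (r : EReal) := ⟨(f b).toReal, (EReal.coe_toReal hb (hreal b)).symm⟩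
        have hqr : q b ≤ r := by
          have := hgeq b
          rw [hr] at this
          exact_mod_cast this
        rw [hr, ← EReal.coe_sub, ← EReal.coe_add]
        have h0 : (0:ℝ) ≤ r - q b + p (c - b) := by
          have := hp0 (c-b); linarith
        exact_mod_cast h0
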